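/- Let f, g : (a,b) → ℝ be continuous functions and let (f₀, …, f_N) be a Sturm sequence for f with respect to g on (a,b). If c, d ∈ (a,b) with c < d are not zeros of f, then v(c) − v(d) = #{x ∈ (c,d) : f(x) = 0 ∧ g(x) > 0} − #{x ∈ (c,d) : f(x) = 0 ∧ g(x) < 0}, where v(x) denotes the number of sign variations in the tuple (f₀(x), …, f_N(x)) after removing zeros. -/

import Mathlib

open Filter Topology


open Set

noncomputable section

/-- Number of sign changes between consecutive entries of a list of reals. -/
def signChanges : List ℝ → ℕ
  | a :: b :: t => (if a * b < 0 then 1 else 0) + signChanges (b :: t)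
  | _ => 0

/-- Number of sign variations of a tuple of reals, after removing zero entries. -/
def signVar (l : List ℝ) : ℕ :=
  signChanges (l.filter (fun x => decide (x ≠ 0)))

/-- `v N F x` is the number of sign variations in `(F 0 x, …, F N x)` after removing zeros. -/
def v (N : ℕ) (F : ℕ → ℝ → ℝ) (x : ℝ) : ℕ :=
  signVar ((List.range (N + 1)).map (fun i => F i x))

/-- `(F 0, …, F N)` is a Sturm sequence in `(a,b)` for `f` with respect to `g`. -/
def SturmSeq (a b : ℝ) (f g : ℝ → ℝ) (N : ℕ) (F : ℕ → ℝ → ℝ) : Prop :=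
  (∀ i ≤ N, ContinuousOn (F i) (Ioo a b)) ∧
  (∀ y ∈ Ioo a b, (F 0 y = 0 ↔ (f y = 0 ∧ g y ≠ 0))) ∧
  (∀ y ∈ Ioo a b, F 0 y = 0 →
    ∃ ε > 0, (∀ x ∈ Ioo (y - ε) (y + ε), F 1 x ≠ 0) ∧
      (g y > 0 →
        (∀ x ∈ Ioo (y - ε) y, F 0 x * F 1 x < 0) ∧
        (∀ x ∈ Ioo y (y + ε), F 0 x * F 1 x > 0)) ∧
      (g y < 0 →
        (∀ x ∈ Ioo (y - ε) y, F 0 x * F 1 x > 0) ∧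
        (∀ x ∈ Ioo y (y + ε), F 0 x * F 1 x < 0))) ∧
  (∀ y ∈ Ioo a b, ∀ i, 1 ≤ i → i ≤ N - 1 → F i y = 0 → F (i - 1) y * F (i + 1) y < 0) ∧
  (∀ y ∈ Ioo a b, F N y ≠ 0)


lemma signChanges_cons_cons (a b : ℝ) (t : List ℝ) :
    signChanges (a :: b :: t) = (if a * b < 0 then 1 else 0) + signChanges (b :: t) := by
  simp [signChanges]

lemma filter_cons_ne {a : ℝ} (ha : a ≠ 0) (t : List ℝ) :
    (a :: t).filter (fun x => decide (x ≠ 0)) = a :: t.filter (fun x => decide (x ≠ 0)) := by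
  simp [List.filter_cons, ha]

lemma filter_cons_zero (t : List ℝ) :
    ((0:ℝ) :: t).filter (fun x => decide (x ≠ 0)) = t.filter (fun x => decide (x ≠ 0)) := by
  simp [List.filter_cons]

lemma signVar_singleton (a : ℝ) : signVar [a] = 0 := by
  unfold signVar
  rcases eq_or_ne a 0 with h | h
  · rw [h, filter_cons_zero]; simp [signChanges]
  · rw [filter_cons_ne h]; simp [signChanges]

lemma signVar_cons_cons {a b : ℝ} (ha : a ≠ 0) (hb : b ≠ 0) (t : List ℝ) :
    signVar (a :: b :: t) = (if a * b < 0 then 1 else 0) + signVar (b :: t) := by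
  unfold signVar
  rw [filter_cons_ne ha, filter_cons_ne hb, signChanges_cons_cons]

lemma signVar_cons_zero_cons {a b : ℝ} (ha : a ≠ 0) (hb : b ≠ 0) (t : List ℝ) :
    signVar (a :: 0 :: b :: t) = (if a * b < 0 then 1 else 0) + signVar (b :: t) := by
  unfold signVar
  rw [filter_cons_ne ha, filter_cons_zero, filter_cons_ne hb, signChanges_cons_cons]

/-- Lists whose head and last entries are nonzero and whose zero entries are isolated
with opposite-sign neighbours. -/
inductive GoodL : List ℝ → Prop
  | single (a : ℝ) (h : a ≠ 0) : GoodL [a]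
  | cons (a b : ℝ) (t : List ℝ) (ha : a ≠ 0) (hb : b ≠ 0) (hg : GoodL (b :: t)) :
      GoodL (a :: b :: t)
  | consZ (a b : ℝ) (t : List ℝ) (ha : a ≠ 0) (hab : a * b < 0) (hg : GoodL (b :: t)) :
      GoodL (a :: 0 :: b :: t)

lemma GoodL.head_ne {a : ℝ} {t : List ℝ} (h : GoodL (a :: t)) : a ≠ 0 := by
  cases h <;> assumption

lemma sq_sign_aux {x y : ℝ} (hx : 0 < x * y) : x ≠ 0 := by
  rintro rfl; simp at hx

lemma mid_sign {u w v : ℝ} (huv : u * v < 0) (hw : w ≠ 0) :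
    (u * w < 0 ∧ 0 < w * v) ∨ (0 < u * w ∧ w * v < 0) := by
  have hu : u ≠ 0 := fun e => by rw [e, zero_mul] at huv; exact lt_irrefl _ huv
  rcases lt_or_gt_of_ne hu with hu' | hu' <;> rcases lt_or_gt_of_ne hw with hw' | hw'
  · have hv : 0 < v := by nlinarith
    exact Or.inr ⟨mul_pos_of_neg_of_neg hu' hw', mul_neg_of_neg_of_pos hw' hv⟩
  · have hv : 0 < v := by nlinarith
    exact Or.inl ⟨mul_neg_of_neg_of_pos hu' hw', mul_pos hw' hv⟩
  · have hv : v < 0 := by nlinarith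
    exact Or.inl ⟨mul_neg_of_pos_of_neg hu' hw', mul_pos_of_neg_of_neg hw' hv⟩
  · have hv : v < 0 := by nlinarith
    exact Or.inr ⟨mul_pos hu' hw', mul_neg_of_pos_of_neg hw' hv⟩

lemma signVar_eq_of_sim : ∀ {l m : List ℝ}, GoodL l →
    List.Forall₂ (fun x y => x ≠ 0 → 0 < x * y) l m → signVar l = signVar m := by
  intro l m hG
  induction hG generalizing m with
  | single a ha =>
    intro h
    rcases h with _ | ⟨ha', h⟩
    rcases h
    rw [signVar_singleton, signVar_singleton]
  | cons a b t ha hb hg ih =>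
    intro h
    rcases h with _ | ⟨haa, h⟩
    rcases h with _ | ⟨hbb, h⟩
    rename_i a' b' t'
    have haa' := haa ha
    have hbb' := hbb hb
    have ha' : a' ≠ 0 := fun e => by rw [e, mul_zero] at haa'; exact lt_irrefl _ haa'
    have hb' : b' ≠ 0 := fun e => by rw [e, mul_zero] at hbb'; exact lt_irrefl _ hbb'
    rw [signVar_cons_cons ha hb, signVar_cons_cons ha' hb', ih (List.Forall₂.cons hbb h)]
    congr 1
    have hiff : a * b < 0 ↔ a' * b' < 0 := by
      constructor <;> intro hx <;> nlinarith [mul_pos haa' hbb']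
    simp only [hiff]
  | consZ a b t ha hab hg ih =>
    intro h
    rcases h with _ | ⟨haa, h⟩
    rcases h with _ | ⟨hcc, h⟩
    rcases h with _ | ⟨hbb, h⟩
    rename_i a' c b' t'
    have hb : b ≠ 0 := hg.head_ne
    have haa' := haa ha
    have hbb' := hbb hb
    have ha' : a' ≠ 0 := fun e => by rw [e, mul_zero] at haa'; exact lt_irrefl _ haa'
    have hb' : b' ≠ 0 := fun e => by rw [e, mul_zero] at hbb'; exact lt_irrefl _ hbb'
    have hab' : a' * b' < 0 := by nlinarith [mul_pos haa' hbb']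
    rw [signVar_cons_zero_cons ha hb, if_pos hab, ih (List.Forall₂.cons hbb h)]
    rcases eq_or_ne c 0 with rfl | hc
    · rw [signVar_cons_zero_cons ha' hb', if_pos hab']
    · rw [signVar_cons_cons ha' hc, signVar_cons_cons hc hb']
      rcases mid_sign hab' hc with ⟨h1, h2⟩ | ⟨h1, h2⟩
      · rw [if_pos h1, if_neg (asymm h2)]; omega
      · rw [if_neg (asymm h1), if_pos h2]; omega

/-- `seqList s n k = [s k, s (k+1), …, s (k+n)]`. -/
def seqList (s : ℕ → ℝ) : ℕ → ℕ → List ℝ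
  | 0, k => [s k]
  | n + 1, k => s k :: seqList s n (k + 1)

lemma seqList_eq_range_map (s : ℕ → ℝ) : ∀ n k,
    seqList s n k = (List.range (n + 1)).map (fun j => s (k + j)) := by
  intro n
  induction n with
  | zero => intro k; rw [show (0:ℕ)+1 = 1 from rfl, List.range_succ]; simp [seqList]
  | succ n ih =>
    intro k
    rw [seqList, List.range_succ_eq_map, List.map_cons, List.map_map, ih (k + 1)]
    simp only [Nat.add_zero]
    congr 1
    apply List.map_congr_left
    intro j _
    simp only [Function.comp_apply]
    congr 1
    omega

lemma v_eq_seqList (N : ℕ) (F : ℕ → ℝ → ℝ) (x : ℝ) :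
    v N F x = signVar (seqList (fun i => F i x) N 0) := by
  rw [v, seqList_eq_range_map]
  congr 1
  apply List.map_congr_left
  intro j _
  simp

lemma seqList_head (s : ℕ → ℝ) (n k : ℕ) : ∃ t, seqList s n k = s k :: t := by
  cases n <;> exact ⟨_, rfl⟩

/-- Construction of `GoodL` from the Sturm-type positional conditions. -/
lemma goodL_seqList (s : ℕ → ℝ) (N : ℕ) (hlast : s N ≠ 0)
    (hmid : ∀ i, 0 < i → i < N → s i = 0 → s (i - 1) * s (i + 1) < 0) :
    ∀ n k, k + n = N → s k ≠ 0 → GoodL (seqList s n k) := by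
  intro n
  induction n using Nat.strong_induction_on with
  | _ n ih =>
    intro k hkn hk
    match n with
    | 0 => exact GoodL.single _ hk
    | 1 =>
      have h1 : s (k + 1) ≠ 0 := by
        have : k + 1 = N := by omega
        rw [this]; exact hlast
      exact GoodL.cons _ _ _ hk h1 (GoodL.single _ h1)
    | n + 2 =>
      rcases eq_or_ne (s (k + 1)) 0 with h1 | h1
      · have hmid' : s k * s (k + 2) < 0 := by
          have := hmid (k + 1) (by omega) (by omega) h1
          simpa using this
        have h2 : s (k + 2) ≠ 0 :=
          fun e => by rw [e, mul_zero] at hmid'; exact lt_irrefl _ hmid'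
        have hg : GoodL (seqList s n (k + 2)) := ih n (by omega) (k + 2) (by omega) h2
        obtain ⟨t, ht⟩ := seqList_head s n (k + 2)
        rw [ht] at hg
        show GoodL (s k :: s (k + 1) :: seqList s n (k + 1 + 1))
        rw [h1, show k + 1 + 1 = k + 2 from rfl, ht]
        exact GoodL.consZ _ _ _ hk hmid' hg
      · have hg : GoodL (seqList s (n + 1) (k + 1)) := ih (n + 1) (by omega) (k + 1) (by omega) h1
        obtain ⟨t, ht⟩ := seqList_head s (n + 1) (k + 1)
        rw [ht] at hg
        show GoodL (s k :: seqList s (n + 1) (k + 1))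
        rw [ht]
        exact GoodL.cons _ _ _ hk h1 hg

/-- Builds the `Forall₂` sign-similarity between two `seqList`s. -/
lemma forall₂_seqList {s s' : ℕ → ℝ} : ∀ n k,
    (∀ i, k ≤ i → i ≤ k + n → s i ≠ 0 → 0 < s i * s' i) →
    List.Forall₂ (fun x y => x ≠ 0 → 0 < x * y) (seqList s n k) (seqList s' n k) := by
  intro n
  induction n with
  | zero => intro k h; exact List.Forall₂.cons (h k le_rfl (by omega)) List.Forall₂.nil
  | succ n ih =>
    intro k h
    exact List.Forall₂.cons (h k le_rfl (by omega))
      (ih (k + 1) (fun i h1 h2 => h i (by omega) (by omega)))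

section Analytic

variable {a b : ℝ} {N : ℕ} {f g : ℝ → ℝ} {F : ℕ → ℝ → ℝ}

/-- Eventually, all the `F i` keep the sign they have at `x₀` (where nonzero). -/
lemma eventually_signs (hcont : ∀ i ≤ N, ContinuousOn (F i) (Ioo a b))
    {x₀ : ℝ} (hx₀ : x₀ ∈ Ioo a b) :
    ∀ᶠ x in 𝓝 x₀, ∀ i ≤ N, F i x₀ ≠ 0 → 0 < F i x₀ * F i x := by
  have : ∀ᶠ x in 𝓝 x₀, ∀ i ∈ Finset.range (N + 1), F i x₀ ≠ 0 → 0 < F i x₀ * F i x := by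
    rw [eventually_all_finset]
    intro i hi
    rcases eq_or_ne (F i x₀) 0 with h0 | h0
    · exact Eventually.of_forall (fun x hne => absurd h0 hne)
    · have hca : ContinuousAt (F i) x₀ :=
        (hcont i (by simpa [Nat.lt_succ_iff] using hi)).continuousAt
          (isOpen_Ioo.mem_nhds hx₀)
      have h2 : (0 : ℝ) < F i x₀ * F i x₀ := mul_self_pos.2 h0
      have hca' : ContinuousAt (fun x => F i x₀ * F i x) x₀ := continuousAt_const.mul hca
      filter_upwards [hca'.eventually (eventually_gt_nhds h2)] with x hx _
      exact hx
  filter_upwards [this] with x hx i hi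
  exact hx i (Finset.mem_range.2 (Nat.lt_succ_of_le hi))

/-- `v` is locally constant near points where `F 0` does not vanish. -/
lemma v_locally_const (hcont : ∀ i ≤ N, ContinuousOn (F i) (Ioo a b))
    (hlast : ∀ y ∈ Ioo a b, F N y ≠ 0)
    (hmid : ∀ y ∈ Ioo a b, ∀ i, 1 ≤ i → i ≤ N - 1 → F i y = 0 → F (i - 1) y * F (i + 1) y < 0)
    {x₀ : ℝ} (hx₀ : x₀ ∈ Ioo a b) (h0 : F 0 x₀ ≠ 0) :
    ∀ᶠ x in 𝓝 x₀, v N F x = v N F x₀ := by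
  filter_upwards [eventually_signs hcont hx₀] with x hx
  have hG : GoodL (seqList (fun i => F i x₀) N 0) :=
    goodL_seqList _ N (hlast x₀ hx₀)
      (fun i hi1 hi2 hi0 => hmid x₀ hx₀ i (by omega) (by omega) hi0) N 0 (by omega) h0
  have hsim := forall₂_seqList (s := fun i => F i x₀) (s' := fun i => F i x) N 0
    (fun i _ h2 hne => hx i (by omega) hne)
  rw [v_eq_seqList, v_eq_seqList]
  exact (signVar_eq_of_sim hG hsim).symm

lemma continuousAt_of_eventually_eq {h : ℝ → ℕ} {x : ℝ}
    (he : ∀ᶠ y in 𝓝 x, h y = h x) : ContinuousAt h x :=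
  (tendsto_pure.2 he).mono_right (pure_le_nhds _)

/-- `v` is constant on closed intervals where `F 0` does not vanish. -/
lemma v_const_on_Icc (hcont : ∀ i ≤ N, ContinuousOn (F i) (Ioo a b))
    (hlast : ∀ y ∈ Ioo a b, F N y ≠ 0)
    (hmid : ∀ y ∈ Ioo a b, ∀ i, 1 ≤ i → i ≤ N - 1 → F i y = 0 → F (i - 1) y * F (i + 1) y < 0)
    {p q : ℝ} (hpq : p ≤ q) (hsub : Icc p q ⊆ Ioo a b)
    (hne : ∀ x ∈ Icc p q, F 0 x ≠ 0) :
    v N F p = v N F q := by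
  refine IsPreconnected.constant isPreconnected_Icc ?_ (left_mem_Icc.2 hpq)
    (right_mem_Icc.2 hpq)
  intro x hx
  exact (continuousAt_of_eventually_eq
    (v_locally_const hcont hlast hmid (hsub hx) (hne x hx))).continuousWithinAt

/-- The jump of `v` across a zero of `F 0`. -/
lemma v_jump (hcont : ∀ i ≤ N, ContinuousOn (F i) (Ioo a b))
    (hiff : ∀ y ∈ Ioo a b, (F 0 y = 0 ↔ (f y = 0 ∧ g y ≠ 0)))
    (hjump : ∀ y ∈ Ioo a b, F 0 y = 0 →
      ∃ ε > 0, (∀ x ∈ Ioo (y - ε) (y + ε), F 1 x ≠ 0) ∧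
        (g y > 0 →
          (∀ x ∈ Ioo (y - ε) y, F 0 x * F 1 x < 0) ∧
          (∀ x ∈ Ioo y (y + ε), F 0 x * F 1 x > 0)) ∧
        (g y < 0 →
          (∀ x ∈ Ioo (y - ε) y, F 0 x * F 1 x > 0) ∧
          (∀ x ∈ Ioo y (y + ε), F 0 x * F 1 x < 0)))
    (hmid : ∀ y ∈ Ioo a b, ∀ i, 1 ≤ i → i ≤ N - 1 → F i y = 0 → F (i - 1) y * F (i + 1) y < 0)
    (hlast : ∀ y ∈ Ioo a b, F N y ≠ 0)
    {z : ℝ} (hz : z ∈ Ioo a b) (h0 : F 0 z = 0) :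
    ∃ δ > 0, Ioo (z - δ) (z + δ) ⊆ Ioo a b ∧
      (∀ x ∈ Ioo (z - δ) (z + δ), x ≠ z → F 0 x ≠ 0) ∧
      (∀ u₁ ∈ Ioo (z - δ) z, ∀ u₂ ∈ Ioo z (z + δ),
        (v N F u₁ : ℤ) - v N F u₂ = if 0 < g z then 1 else -1) := by
  have hgz : g z ≠ 0 := ((hiff z hz).1 h0).2
  obtain ⟨M, rfl⟩ : ∃ M, N = M + 1 := by
    refine ⟨N - 1, ?_⟩
    rcases Nat.eq_zero_or_pos N with h | h
    · exfalso; rw [h] at hlast; exact hlast z hz (h ▸ h0)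
    · omega
  obtain ⟨ε, hε, hF1, hPos, hNeg⟩ := hjump z hz h0
  have hE : {x | x ∈ Ioo a b ∧ ∀ i ≤ M + 1, F i z ≠ 0 → 0 < F i z * F i x} ∈ 𝓝 z := by
    exact inter_mem (isOpen_Ioo.mem_nhds hz) (eventually_signs hcont hz)
  obtain ⟨δ₀, hδ₀, hball⟩ := Metric.mem_nhds_iff.1 hE
  rw [Real.ball_eq_Ioo] at hball
  refine ⟨min δ₀ ε, lt_min hδ₀ hε, ?_, ?_, ?_⟩
  · intro x hx
    exact (hball ⟨by have := hx.1; have := min_le_left δ₀ ε; linarith,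
      by have := hx.2; have := min_le_left δ₀ ε; linarith⟩).1
  · intro x hx hxz
    have hx1 : F 1 x ≠ 0 := hF1 x ⟨by have := hx.1; have := min_le_right δ₀ ε; linarith,
      by have := hx.2; have := min_le_right δ₀ ε; linarith⟩
    intro h00
    rcases lt_or_gt_of_ne hxz with h | h
    · have hxI : x ∈ Ioo (z - ε) z := ⟨by have := hx.1; have := min_le_right δ₀ ε; linarith, h⟩
      rcases lt_or_gt_of_ne hgz with hg' | hg'
      · have := (hNeg hg').1 x hxI; rw [h00, zero_mul] at this; exact lt_irrefl _ this
      · have := (hPos hg').1 x hxI; rw [h00, zero_mul] at this; exact lt_irrefl _ this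
    · have hxI : x ∈ Ioo z (z + ε) := ⟨h, by have := hx.2; have := min_le_right δ₀ ε; linarith⟩
      rcases lt_or_gt_of_ne hgz with hg' | hg'
      · have := (hNeg hg').2 x hxI; rw [h00, zero_mul] at this; exact lt_irrefl _ this
      · have := (hPos hg').2 x hxI; rw [h00, zero_mul] at this; exact lt_irrefl _ this
  · intro u₁ hu₁ u₂ hu₂
    have hδle1 := min_le_left δ₀ ε
    have hδle2 := min_le_right δ₀ ε
    have hz1 : F 1 z ≠ 0 := hF1 z ⟨by linarith, by linarith⟩
    set S := signVar (seqList (fun i => F i z) M 1) with hS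
    -- the generic computation at a nearby nonzero point
    have key : ∀ x, x ∈ Ioo (z - min δ₀ ε) (z + min δ₀ ε) → F 0 x ≠ 0 → F 1 x ≠ 0 →
        v (M + 1) F x = (if F 0 x * F 1 x < 0 then 1 else 0) + S := by
      intro x hx h0x h1x
      have hxE := hball ⟨by have := hx.1; linarith, by have := hx.2; linarith⟩
      have hG : GoodL (seqList (fun i => F i z) M 1) :=
        goodL_seqList _ (M + 1) (hlast z hz)
          (fun i hi1 hi2 hi0 => hmid z hz i (by omega) (by omega) hi0) M 1 (by omega) hz1
      have hsim := forall₂_seqList (s := fun i => F i z) (s' := fun i => F i x) M 1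
        (fun i h1 h2 hne => hxE.2 i (by omega) hne)
      have hSx : S = signVar (seqList (fun i => F i x) M 1) := signVar_eq_of_sim hG hsim
      rw [v_eq_seqList]
      show signVar (seqList (fun i => F i x) (M + 1) 0) = _
      rw [show seqList (fun i => F i x) (M + 1) 0 = F 0 x :: seqList (fun i => F i x) M 1 from rfl]
      obtain ⟨t, ht⟩ := seqList_head (fun i => F i x) M 1
      rw [ht, signVar_cons_cons h0x (by exact h1x), ← ht, ← hSx]
    have hu₁ε : u₁ ∈ Ioo (z - ε) z := ⟨by have := hu₁.1; linarith, hu₁.2⟩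
    have hu₂ε : u₂ ∈ Ioo z (z + ε) := ⟨hu₂.1, by have := hu₂.2; linarith⟩
    have hu₁' : u₁ ∈ Ioo (z - min δ₀ ε) (z + min δ₀ ε) :=
      ⟨hu₁.1, by have := hu₁.2; have : (0:ℝ) < min δ₀ ε := lt_min hδ₀ hε; linarith⟩
    have hu₂' : u₂ ∈ Ioo (z - min δ₀ ε) (z + min δ₀ ε) :=
      ⟨by have := hu₂.1; have : (0:ℝ) < min δ₀ ε := lt_min hδ₀ hε; linarith, hu₂.2⟩
    have h1u₁ : F 1 u₁ ≠ 0 := hF1 u₁ ⟨hu₁ε.1, by have := hu₁ε.2; linarith⟩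
    have h1u₂ : F 1 u₂ ≠ 0 := hF1 u₂ ⟨by have := hu₂ε.1; linarith, hu₂ε.2⟩
    rcases lt_or_gt_of_ne hgz with hg' | hg'
    · obtain ⟨hL, hR⟩ := hNeg hg'
      have p₁ := hL u₁ hu₁ε
      have p₂ := hR u₂ hu₂ε
      have h0u₁ : F 0 u₁ ≠ 0 := fun e => by rw [e, zero_mul] at p₁; exact lt_irrefl _ p₁
      have h0u₂ : F 0 u₂ ≠ 0 := fun e => by rw [e, zero_mul] at p₂; exact lt_irrefl _ p₂
      rw [key u₁ hu₁' h0u₁ h1u₁, key u₂ hu₂' h0u₂ h1u₂, if_neg (asymm p₁), if_pos p₂,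
        if_neg (asymm hg')]
      push_cast
      ring
    · obtain ⟨hL, hR⟩ := hPos hg'
      have p₁ := hL u₁ hu₁ε
      have p₂ := hR u₂ hu₂ε
      have h0u₁ : F 0 u₁ ≠ 0 := fun e => by rw [e, zero_mul] at p₁; exact lt_irrefl _ p₁
      have h0u₂ : F 0 u₂ ≠ 0 := fun e => by rw [e, zero_mul] at p₂; exact lt_irrefl _ p₂
      rw [key u₁ hu₁' h0u₁ h1u₁, key u₂ hu₂' h0u₂ h1u₂, if_pos p₁, if_neg (asymm p₂),
        if_pos hg']
      push_cast
      ring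

/-- The zero set of `F 0` on a compact subinterval is finite. -/
lemma zeros_finite (hcont : ∀ i ≤ N, ContinuousOn (F i) (Ioo a b))
    (hiff : ∀ y ∈ Ioo a b, (F 0 y = 0 ↔ (f y = 0 ∧ g y ≠ 0)))
    (hjump : ∀ y ∈ Ioo a b, F 0 y = 0 →
      ∃ ε > 0, (∀ x ∈ Ioo (y - ε) (y + ε), F 1 x ≠ 0) ∧
        (g y > 0 →
          (∀ x ∈ Ioo (y - ε) y, F 0 x * F 1 x < 0) ∧
          (∀ x ∈ Ioo y (y + ε), F 0 x * F 1 x > 0)) ∧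
        (g y < 0 →
          (∀ x ∈ Ioo (y - ε) y, F 0 x * F 1 x > 0) ∧
          (∀ x ∈ Ioo y (y + ε), F 0 x * F 1 x < 0)))
    (hmid : ∀ y ∈ Ioo a b, ∀ i, 1 ≤ i → i ≤ N - 1 → F i y = 0 → F (i - 1) y * F (i + 1) y < 0)
    (hlast : ∀ y ∈ Ioo a b, F N y ≠ 0)
    {p q : ℝ} (hsub : Icc p q ⊆ Ioo a b) :
    {x ∈ Icc p q | F 0 x = 0}.Finite := by
  set Z := {x ∈ Icc p q | F 0 x = 0} with hZ
  have hZsub : Z ⊆ Icc p q := fun x hx => hx.1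
  have hZclosed : IsClosed Z := by
    have : Z = Icc p q ∩ F 0 ⁻¹' {0} := by
      ext x; simp [hZ]
    rw [this]
    exact ContinuousOn.preimage_isClosed_of_isClosed
      ((hcont 0 (Nat.zero_le N)).mono hsub) isClosed_Icc isClosed_singleton
  have hZcompact : IsCompact Z := isCompact_Icc.of_isClosed_subset hZclosed hZsub
  haveI hdisc : DiscreteTopology Z := by
    rw [discreteTopology_subtype_iff]
    intro x hx
    obtain ⟨δ, hδ, _, hiso, _⟩ :=
      v_jump hcont hiff hjump hmid hlast (hsub hx.1) hx.2
    rw [← Filter.empty_mem_iff_bot]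
    have h1 : Ioo (x - δ) (x + δ) ∈ 𝓝 x :=
      isOpen_Ioo.mem_nhds ⟨by linarith, by linarith⟩
    have h2 : Ioo (x - δ) (x + δ) ∩ {x}ᶜ ∈ 𝓝[≠] x :=
      inter_mem (mem_nhdsWithin_of_mem_nhds h1) self_mem_nhdsWithin
    have h3 : (Ioo (x - δ) (x + δ) ∩ {x}ᶜ) ∩ Z ∈ 𝓝[≠] x ⊓ 𝓟 Z :=
      inter_mem_inf h2 (mem_principal_self Z)
    have h4 : (Ioo (x - δ) (x + δ) ∩ {x}ᶜ) ∩ Z = ∅ := by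
      ext y
      simp only [mem_inter_iff, mem_compl_iff, mem_singleton_iff, mem_empty_iff_false,
        iff_false, not_and, not_imp_not (a := y ∈ Z)]
      intro hy1 hy2
      exact hiso y hy1.1 hy1.2 hy2.2
    rwa [h4] at h3
  exact hZcompact.finite (isDiscrete_iff_discreteTopology.mpr hdisc)

lemma main_count (hcont : ∀ i ≤ N, ContinuousOn (F i) (Ioo a b))
    (hiff : ∀ y ∈ Ioo a b, (F 0 y = 0 ↔ (f y = 0 ∧ g y ≠ 0)))
    (hjump : ∀ y ∈ Ioo a b, F 0 y = 0 →
      ∃ ε > 0, (∀ x ∈ Ioo (y - ε) (y + ε), F 1 x ≠ 0) ∧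
        (g y > 0 →
          (∀ x ∈ Ioo (y - ε) y, F 0 x * F 1 x < 0) ∧
          (∀ x ∈ Ioo y (y + ε), F 0 x * F 1 x > 0)) ∧
        (g y < 0 →
          (∀ x ∈ Ioo (y - ε) y, F 0 x * F 1 x > 0) ∧
          (∀ x ∈ Ioo y (y + ε), F 0 x * F 1 x < 0)))
    (hmid : ∀ y ∈ Ioo a b, ∀ i, 1 ≤ i → i ≤ N - 1 → F i y = 0 → F (i - 1) y * F (i + 1) y < 0)
    (hlast : ∀ y ∈ Ioo a b, F N y ≠ 0) :
    ∀ n : ℕ, ∀ p q : ℝ, p ∈ Ioo a b → q ∈ Ioo a b → p < q → F 0 p ≠ 0 → F 0 q ≠ 0 →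
    {x ∈ Ioo p q | F 0 x = 0}.ncard = n →
    (v N F p : ℤ) - v N F q =
      ({x ∈ Ioo p q | f x = 0 ∧ g x > 0}.ncard : ℤ) -
        ({x ∈ Ioo p q | f x = 0 ∧ g x < 0}.ncard : ℤ) := by
  intro n
  induction n with
  | zero =>
    intro p q hp hq hpq h0p h0q hn
    have hIccsub : Icc p q ⊆ Ioo a b :=
      fun x hx => ⟨lt_of_lt_of_le hp.1 hx.1, lt_of_le_of_lt hx.2 hq.2⟩
    have hIoosub : Ioo p q ⊆ Ioo a b := fun x hx => hIccsub (Ioo_subset_Icc_self hx)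
    have hZfin : {x ∈ Icc p q | F 0 x = 0}.Finite :=
      zeros_finite hcont hiff hjump hmid hlast hIccsub
    have hZofin : {x ∈ Ioo p q | F 0 x = 0}.Finite :=
      hZfin.subset (fun x hx => ⟨Ioo_subset_Icc_self hx.1, hx.2⟩)
    have hempty : {x ∈ Ioo p q | F 0 x = 0} = ∅ := (Set.ncard_eq_zero hZofin).1 hn
    have hnone : ∀ x ∈ Icc p q, F 0 x ≠ 0 := by
      intro x hx h0x
      rcases eq_or_lt_of_le hx.1 with rfl | h1
      · exact h0p h0x
      rcases eq_or_lt_of_le hx.2 with rfl | h2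
      · exact h0q h0x
      have : x ∈ ({x ∈ Ioo p q | F 0 x = 0} : Set ℝ) := ⟨⟨h1, h2⟩, h0x⟩
      rw [hempty] at this
      exact this
    have hv : v N F p = v N F q := v_const_on_Icc hcont hlast hmid hpq.le hIccsub hnone
    have hPe : {x ∈ Ioo p q | f x = 0 ∧ g x > 0} = ∅ := by
      ext x
      simp only [mem_setOf_eq, mem_empty_iff_false, iff_false, not_and]
      intro hx hfx hgx
      have h0x : F 0 x = 0 := (hiff x (hIoosub hx)).2 ⟨hfx, ne_of_gt hgx⟩
      have : x ∈ ({x ∈ Ioo p q | F 0 x = 0} : Set ℝ) := ⟨hx, h0x⟩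
      rw [hempty] at this; exact this
    have hNe : {x ∈ Ioo p q | f x = 0 ∧ g x < 0} = ∅ := by
      ext x
      simp only [mem_setOf_eq, mem_empty_iff_false, iff_false, not_and]
      intro hx hfx hgx
      have h0x : F 0 x = 0 := (hiff x (hIoosub hx)).2 ⟨hfx, ne_of_lt hgx⟩
      have : x ∈ ({x ∈ Ioo p q | F 0 x = 0} : Set ℝ) := ⟨hx, h0x⟩
      rw [hempty] at this; exact this
    rw [hv, hPe, hNe]
    simp
  | succ n ih =>
    intro p q hp hq hpq h0p h0q hn
    have hIccsub : Icc p q ⊆ Ioo a b :=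
      fun x hx => ⟨lt_of_lt_of_le hp.1 hx.1, lt_of_le_of_lt hx.2 hq.2⟩
    have hIoosub : Ioo p q ⊆ Ioo a b := fun x hx => hIccsub (Ioo_subset_Icc_self hx)
    have hZfin : {x ∈ Icc p q | F 0 x = 0}.Finite :=
      zeros_finite hcont hiff hjump hmid hlast hIccsub
    set Z := {x ∈ Ioo p q | F 0 x = 0} with hZdef
    have hZofin : Z.Finite := hZfin.subset (fun x hx => ⟨Ioo_subset_Icc_self hx.1, hx.2⟩)
    have hZne : Z.Nonempty := Set.nonempty_of_ncard_ne_zero (by rw [hn]; exact Nat.succ_ne_zero n)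
    obtain ⟨z, hzZ, hzmin⟩ := Set.exists_min_image Z id hZofin hZne
    simp only [id] at hzmin
    have hzpq : z ∈ Ioo p q := hzZ.1
    have h0z : F 0 z = 0 := hzZ.2
    have hzab : z ∈ Ioo a b := hIoosub hzpq
    obtain ⟨δ, hδ, hδsub, hiso, hjmp⟩ := v_jump hcont hiff hjump hmid hlast hzab h0z
    obtain ⟨B, hzB, hBq, hBmin⟩ : ∃ B, z < B ∧ B ≤ q ∧ ∀ w ∈ Z, w ≠ z → B ≤ w := by
      by_cases hW : (Z \ {z}).Nonempty
      · obtain ⟨B, hBmem, hBmin⟩ := Set.exists_min_image (Z \ {z}) id hZofin.diff hW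
        simp only [id] at hBmin
        refine ⟨B, lt_of_le_of_ne (hzmin B hBmem.1) (Ne.symm hBmem.2), hBmem.1.1.2.le, ?_⟩
        exact fun w hw hwz => hBmin w ⟨hw, hwz⟩
      · exact ⟨q, hzpq.2, le_rfl, fun w hw hwz => absurd ⟨w, hw, hwz⟩ hW⟩
    set u₁ := max ((p + z) / 2) (z - δ / 2) with hu₁def
    set u₂ := min ((z + B) / 2) (z + δ / 2) with hu₂def
    have hpu₁ : p < u₁ := lt_max_of_lt_left (by linarith [hzpq.1])
    have hu₁z : u₁ < z := max_lt (by linarith [hzpq.1]) (by linarith)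
    have hu₁δ : z - δ < u₁ := lt_of_lt_of_le (by linarith) (le_max_right _ _)
    have hzu₂ : z < u₂ := lt_min (by linarith) (by linarith)
    have hu₂δ : u₂ < z + δ := lt_of_le_of_lt (min_le_right _ _) (by linarith)
    have hu₂B : u₂ < B := lt_of_le_of_lt (min_le_left _ _) (by linarith)
    have hu₂q : u₂ < q := lt_of_lt_of_le hu₂B hBq
    have hu₂ab : u₂ ∈ Ioo a b := ⟨by linarith [hp.1, hzpq.1], by linarith [hq.2]⟩
    have h0u₂ : F 0 u₂ ≠ 0 := hiso u₂ ⟨by linarith, hu₂δ⟩ (ne_of_gt hzu₂)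
    -- step 1 : v p = v u₁
    have step1 : v N F p = v N F u₁ := by
      refine v_const_on_Icc hcont hlast hmid hpu₁.le
        (fun x hx => ⟨lt_of_lt_of_le hp.1 hx.1, by
          have := hx.2; have := hq.2; have := hzpq.2; linarith⟩) ?_
      intro x hx h0x
      rcases eq_or_lt_of_le hx.1 with rfl | h1
      · exact h0p h0x
      have hz' := hzmin x ⟨⟨h1, by have := hx.2; have := hzpq.2; linarith⟩, h0x⟩
      have := hx.2
      linarith
    -- step 2 : the jump
    have step2 : (v N F u₁ : ℤ) - v N F u₂ = if 0 < g z then 1 else -1 :=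
      hjmp u₁ ⟨hu₁δ, hu₁z⟩ u₂ ⟨hzu₂, hu₂δ⟩
    -- step 3 : the remaining zeros
    have hZ' : {x ∈ Ioo u₂ q | F 0 x = 0} = Z \ {z} := by
      ext x
      constructor
      · rintro ⟨⟨hx1, hx2⟩, h0x⟩
        exact ⟨⟨⟨by linarith [hzpq.1], hx2⟩, h0x⟩, by
          simp only [mem_singleton_iff]; intro e; rw [e] at hx1; linarith⟩
      · rintro ⟨⟨⟨hpx, hxq⟩, h0x⟩, hxz⟩
        simp only [mem_singleton_iff] at hxz
        have hBx := hBmin x ⟨⟨hpx, hxq⟩, h0x⟩ hxz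
        exact ⟨⟨by linarith, hxq⟩, h0x⟩
    have hcard' : {x ∈ Ioo u₂ q | F 0 x = 0}.ncard = n := by
      rw [hZ', Set.ncard_diff_singleton_of_mem hzZ, hn]
      omega
    have step3 := ih u₂ q hu₂ab hq hu₂q h0u₂ h0q hcard'
    -- counting bookkeeping
    have hfz : f z = 0 ∧ g z ≠ 0 := (hiff z hzab).1 h0z
    set Ppq := {x ∈ Ioo p q | f x = 0 ∧ g x > 0} with hPpq
    set Npq := {x ∈ Ioo p q | f x = 0 ∧ g x < 0} with hNpq
    set P' := {x ∈ Ioo u₂ q | f x = 0 ∧ g x > 0} with hP'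
    set N' := {x ∈ Ioo u₂ q | f x = 0 ∧ g x < 0} with hN'
    have hIoosub' : Ioo u₂ q ⊆ Ioo p q := fun x hx => ⟨by have := hx.1; linarith [hzpq.1], hx.2⟩
    have hPZ : Ppq ⊆ Z := fun x hx => ⟨hx.1, (hiff x (hIoosub hx.1)).2 ⟨hx.2.1, ne_of_gt hx.2.2⟩⟩
    have hNZ : Npq ⊆ Z := fun x hx => ⟨hx.1, (hiff x (hIoosub hx.1)).2 ⟨hx.2.1, ne_of_lt hx.2.2⟩⟩
    have hP'fin : P'.Finite := hZofin.subset (fun x hx => hPZ (hIoosub' hx.1 |> fun h => ⟨h, hx.2⟩))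
    have hN'fin : N'.Finite := hZofin.subset (fun x hx => hNZ (hIoosub' hx.1 |> fun h => ⟨h, hx.2⟩))
    have hsplit : ∀ x ∈ Z, x = z ∨ x ∈ Ioo u₂ q := by
      intro x hxZ
      rcases eq_or_ne x z with rfl | hxz
      · exact Or.inl rfl
      · exact Or.inr ⟨lt_of_lt_of_le hu₂B (hBmin x hxZ hxz), hxZ.1.2⟩
    have hzu₂' : z ∉ Ioo u₂ q := fun h => absurd h.1 (not_lt.2 hzu₂.le)
    rcases lt_or_gt_of_ne hfz.2 with hgz | hgz
    · -- g z < 0 : the negative set gains z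
      have hNeq : Npq = insert z N' := by
        ext x
        constructor
        · intro hx
          rcases hsplit x (hNZ hx) with rfl | hx2
          · exact mem_insert _ _
          · exact mem_insert_of_mem _ ⟨hx2, hx.2⟩
        · rintro (rfl | hx)
          · exact ⟨hzpq, hfz.1, hgz⟩
          · exact ⟨hIoosub' hx.1, hx.2⟩
      have hPeq : Ppq = P' := by
        ext x
        constructor
        · intro hx
          rcases hsplit x (hPZ hx) with rfl | hx2
          · exact absurd hx.2.2 (not_lt.2 hgz.le)
          · exact ⟨hx2, hx.2⟩
        · intro hx
          exact ⟨hIoosub' hx.1, hx.2⟩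
      have hzN' : z ∉ N' := fun h => hzu₂' h.1
      have hNcard : Npq.ncard = N'.ncard + 1 := by
        rw [hNeq, Set.ncard_insert_of_notMem hzN' hN'fin]
      rw [if_neg (not_lt.2 hgz.le)] at step2
      have : (v N F p : ℤ) - v N F q =
          ((v N F u₁ : ℤ) - v N F u₂) + ((v N F u₂ : ℤ) - v N F q) := by
        rw [show ((v N F p : ℤ)) = ((v N F u₁ : ℤ)) from by rw [step1]]
        ring
      rw [this, step2, step3, hPeq, hNcard]
      push_cast
      ring
    · -- g z > 0 : the positive set gains z
      have hPeq : Ppq = insert z P' := by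
        ext x
        constructor
        · intro hx
          rcases hsplit x (hPZ hx) with rfl | hx2
          · exact mem_insert _ _
          · exact mem_insert_of_mem _ ⟨hx2, hx.2⟩
        · rintro (rfl | hx)
          · exact ⟨hzpq, hfz.1, hgz⟩
          · exact ⟨hIoosub' hx.1, hx.2⟩
      have hNeq : Npq = N' := by
        ext x
        constructor
        · intro hx
          rcases hsplit x (hNZ hx) with rfl | hx2
          · exact absurd hx.2.2 (not_lt.2 hgz.le)
          · exact ⟨hx2, hx.2⟩
        · intro hx
          exact ⟨hIoosub' hx.1, hx.2⟩
      have hzP' : z ∉ P' := fun h => hzu₂' h.1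
      have hPcard : Ppq.ncard = P'.ncard + 1 := by
        rw [hPeq, Set.ncard_insert_of_notMem hzP' hP'fin]
      rw [if_pos hgz] at step2
      have : (v N F p : ℤ) - v N F q =
          ((v N F u₁ : ℤ) - v N F u₂) + ((v N F u₂ : ℤ) - v N F q) := by
        rw [show ((v N F p : ℤ)) = ((v N F u₁ : ℤ)) from by rw [step1]]
        ring
      rw [this, step2, step3, hNeq, hPcard]
      push_cast
      ring

end Analytic

theorem sturm_variation_count {a b : ℝ} {N : ℕ} {f g : ℝ → ℝ} {F : ℕ → ℝ → ℝ}
    (hf : ContinuousOn f (Ioo a b)) (hg : ContinuousOn g (Ioo a b))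
    (hSturm : SturmSeq a b f g N F)
    {c d : ℝ} (hc : c ∈ Ioo a b) (hd : d ∈ Ioo a b) (hcd : c < d)
    (hfc : f c ≠ 0) (hfd : f d ≠ 0) :
    (v N F c : ℤ) - v N F d =
      ({x ∈ Ioo c d | f x = 0 ∧ g x > 0}.ncard : ℤ) -
        ({x ∈ Ioo c d | f x = 0 ∧ g x < 0}.ncard : ℤ) := by
  obtain ⟨hcont, hiff, hjump, hmid, hlast⟩ := hSturm
  have h0c : F 0 c ≠ 0 := fun h => hfc ((hiff c hc).1 h).1
  have h0d : F 0 d ≠ 0 := fun h => hfd ((hiff d hd).1 h).1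
  exact main_count hcont hiff hjump hmid hlast _ c d hc hd hcd h0c h0d rfl

end
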